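/- Fix real constants m₀ > 0, ω > 0, ħ > 0, a > -1, γ > 1/2 and set λ₀ = √(m₀ω/ħ). Define for x ≠ 0: (X̃f)(x) = √m₀·λ₀^a·|x|^a·x·f(x), (P̃f)(x) = -iħ·(λ₀^a√m₀)⁻¹·( |x|^{-a}·f'(x) - (a/2)·|x|^{-a-2}·x·f(x) - (γ-1/2)·|x|^{-a}·x⁻¹·f(-x) ), (ã^±f)(x) = (1/√2)·(√(ω/ħ)·(X̃f)(x) ∓ (i/√(ħω))·(P̃f)(x)), and the Hamiltonian (Hf)(x) = (1/2)·P̃(P̃f)(x) + (ω²/2)·X̃(X̃f)(x). Then for every f : ℝ → ℂ three times differentiable on ℝ \ {0} and every x ≠ 0: H(ã⁺f)(x) - ã⁺(Hf)(x) = ħω·(1+a)·(ã⁺f)(x) and H(ã⁻f)(x) - ã⁻(Hf)(x) = -ħω·(1+a)·(ã⁻f)(x). -/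

import Mathlib

open Real Complex Filter


/-- The deformed position operator `(X̃f)(x) = √m₀·λ₀^a·|x|^a·x·f(x)`. -/
noncomputable def Xop (m₀ lam a : ℝ) (f : ℝ → ℂ) (x : ℝ) : ℂ :=
  ((Real.sqrt m₀ * lam ^ a * |x| ^ a * x : ℝ) : ℂ) * f x

/-- The deformed parabose momentum operator
`(P̃f)(x) = -iħ·(λ₀^a√m₀)⁻¹·(|x|^(-a)·f'(x) - (a/2)·|x|^(-a-2)·x·f(x)
  - (γ-1/2)·|x|^(-a)·x⁻¹·f(-x))`. -/
noncomputable def Ppb (hbar m₀ lam a γ : ℝ) (f : ℝ → ℂ) (x : ℝ) : ℂ :=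
  (-Complex.I) * (hbar : ℂ) * (((lam ^ a * Real.sqrt m₀ : ℝ) : ℂ))⁻¹ *
    (((|x| ^ (-a) : ℝ) : ℂ) * deriv f x
      - ((a / 2 : ℝ) : ℂ) * ((|x| ^ (-a - 2) : ℝ) : ℂ) * (x : ℂ) * f x
      - ((γ - 1 / 2 : ℝ) : ℂ) * ((|x| ^ (-a) : ℝ) : ℂ) * (x : ℂ)⁻¹ * f (-x))

/-- The parabose creation operator `(ã⁺f)(x) = (1/√2)·(√(ω/ħ)·(X̃f)(x) - (i/√(ħω))·(P̃f)(x))`. -/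
noncomputable def aPlusPB (hbar m₀ ω lam a γ : ℝ) (f : ℝ → ℂ) (x : ℝ) : ℂ :=
  ((1 / Real.sqrt 2 : ℝ) : ℂ) *
    (((Real.sqrt (ω / hbar) : ℝ) : ℂ) * Xop m₀ lam a f x
      - Complex.I / ((Real.sqrt (hbar * ω) : ℝ) : ℂ) * Ppb hbar m₀ lam a γ f x)

/-- The parabose annihilation operator
`(ã⁻f)(x) = (1/√2)·(√(ω/ħ)·(X̃f)(x) + (i/√(ħω))·(P̃f)(x))`. -/
noncomputable def aMinusPB (hbar m₀ ω lam a γ : ℝ) (f : ℝ → ℂ) (x : ℝ) : ℂ :=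
  ((1 / Real.sqrt 2 : ℝ) : ℂ) *
    (((Real.sqrt (ω / hbar) : ℝ) : ℂ) * Xop m₀ lam a f x
      + Complex.I / ((Real.sqrt (hbar * ω) : ℝ) : ℂ) * Ppb hbar m₀ lam a γ f x)

/-- The parabose Hamiltonian `(Hf)(x) = (1/2)·P̃(P̃f)(x) + (ω²/2)·X̃(X̃f)(x)`. -/
noncomputable def HopPB (hbar m₀ ω lam a γ : ℝ) (f : ℝ → ℂ) (x : ℝ) : ℂ :=
  (1 / 2 : ℂ) * Ppb hbar m₀ lam a γ (Ppb hbar m₀ lam a γ f) x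
    + ((ω ^ 2 / 2 : ℝ) : ℂ) * Xop m₀ lam a (Xop m₀ lam a f) x

lemma hasDerivAt_absRpow (p : ℝ) {x : ℝ} (hx : x ≠ 0) :
    HasDerivAt (fun y : ℝ => |y| ^ p) (p * |x| ^ p / x) x := by
  rcases hx.lt_or_gt with h | h
  · have hx' : (0:ℝ) < -x := by linarith
    have h1 : HasDerivAt (fun y : ℝ => (-y) ^ p) (p * (-x) ^ (p - 1) * (-1)) x :=
      (Real.hasDerivAt_rpow_const (x := -x) (p := p) (Or.inl (ne_of_gt hx'))).comp x
        (hasDerivAt_neg x)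
    have heq : (fun y : ℝ => |y| ^ p) =ᶠ[nhds x] (fun y : ℝ => (-y) ^ p) := by
      filter_upwards [eventually_lt_nhds h] with y hy
      rw [abs_of_neg hy]
    have h2 := h1.congr_of_eventuallyEq heq
    refine h2.congr_deriv ?_
    rw [abs_of_neg h, Real.rpow_sub hx', Real.rpow_one]
    field_simp
  · have h1 : HasDerivAt (fun y : ℝ => y ^ p) (p * x ^ (p - 1)) x :=
      Real.hasDerivAt_rpow_const (Or.inl hx)
    have heq : (fun y : ℝ => |y| ^ p) =ᶠ[nhds x] (fun y : ℝ => y ^ p) := by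
      filter_upwards [eventually_gt_nhds h] with y hy
      rw [abs_of_pos hy]
    have h2 := h1.congr_of_eventuallyEq heq
    refine h2.congr_deriv ?_
    rw [abs_of_pos h, Real.rpow_sub h, Real.rpow_one]
    field_simp

lemma hasDerivAt_abs_rpowC (p : ℝ) {x : ℝ} (hx : x ≠ 0) :
    HasDerivAt (fun y : ℝ => ((|y| ^ p : ℝ) : ℂ)) (((p * |x| ^ p / x : ℝ) : ℂ)) x :=
  (hasDerivAt_absRpow p hx).ofReal_comp

lemma hasDerivAt_ofRealC (x : ℝ) : HasDerivAt (fun y : ℝ => (y : ℂ)) 1 x := by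
  simpa using (hasDerivAt_id x).ofReal_comp

lemma DifferentiableAt.ofRealC {u : ℝ → ℝ} {x : ℝ} (h : DifferentiableAt ℝ u x) :
    DifferentiableAt ℝ (fun y => ((u y : ℝ) : ℂ)) x :=
  Complex.ofRealCLM.differentiableAt.comp x h

noncomputable def Xd (m₀ lam a : ℝ) (f : ℝ → ℂ) (x : ℝ) : ℂ :=
  ((Real.sqrt m₀ * lam ^ a * ((a + 1) * |x| ^ a) : ℝ) : ℂ) * f x
    + ((Real.sqrt m₀ * lam ^ a * |x| ^ a * x : ℝ) : ℂ) * deriv f x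

lemma hasDerivAt_Xop (m₀ lam a : ℝ) {f : ℝ → ℂ} {x : ℝ} (hx : x ≠ 0)
    (hf : DifferentiableAt ℝ f x) :
    HasDerivAt (Xop m₀ lam a f) (Xd m₀ lam a f x) x := by
  unfold Xop Xd
  have hc : HasDerivAt (fun y : ℝ => Real.sqrt m₀ * lam ^ a * |y| ^ a * y)
      (Real.sqrt m₀ * lam ^ a * ((a + 1) * |x| ^ a)) x := by
    have h1 := ((hasDerivAt_absRpow a hx).const_mul (Real.sqrt m₀ * lam ^ a)).mul
      (hasDerivAt_id x)
    refine h1.congr_deriv ?_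
    rw [id_eq]
    field_simp
  exact (hc.ofReal_comp).mul hf.hasDerivAt

noncomputable def Pd (hbar m₀ lam a γ : ℝ) (f : ℝ → ℂ) (x : ℝ) : ℂ :=
  -Complex.I * (hbar : ℂ) * (((lam ^ a * Real.sqrt m₀ : ℝ) : ℂ))⁻¹ *
    (((-a * |x| ^ (-a) / x : ℝ) : ℂ) * deriv f x
        + ((|x| ^ (-a) : ℝ) : ℂ) * deriv (deriv f) x
      - ((((a / 2 : ℝ) : ℂ) * (((-a - 2) * |x| ^ (-a - 2) / x : ℝ) : ℂ) * (x : ℂ)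
            + ((a / 2 : ℝ) : ℂ) * ((|x| ^ (-a - 2) : ℝ) : ℂ) * 1) * f x
          + ((a / 2 : ℝ) : ℂ) * ((|x| ^ (-a - 2) : ℝ) : ℂ) * (x : ℂ) * deriv f x)
      - ((((γ - 1 / 2 : ℝ) : ℂ) * ((-a * |x| ^ (-a) / x : ℝ) : ℂ) * ((x : ℂ))⁻¹
            + ((γ - 1 / 2 : ℝ) : ℂ) * ((|x| ^ (-a) : ℝ) : ℂ) * (-(((x : ℂ) ^ 2)⁻¹))) * f (-x)
          + ((γ - 1 / 2 : ℝ) : ℂ) * ((|x| ^ (-a) : ℝ) : ℂ) * ((x : ℂ))⁻¹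
              * ((-1 : ℝ) • deriv f (-x))))

lemma hasDerivAt_Ppb (hbar m₀ lam a γ : ℝ) {f : ℝ → ℂ} {x : ℝ} (hx : x ≠ 0)
    (hf1 : DifferentiableAt ℝ f x) (hf2 : DifferentiableAt ℝ f (-x))
    (hf3 : DifferentiableAt ℝ (deriv f) x) :
    HasDerivAt (Ppb hbar m₀ lam a γ f) (Pd hbar m₀ lam a γ f x) x := by
  have hxC : (x : ℂ) ≠ 0 := Complex.ofReal_ne_zero.mpr hx
  have h1 := (hasDerivAt_abs_rpowC (-a) hx).mul hf3.hasDerivAt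
  have h2 := (((hasDerivAt_abs_rpowC (-a - 2) hx).const_mul ((a / 2 : ℝ) : ℂ)).mul
      (hasDerivAt_ofRealC x)).mul hf1.hasDerivAt
  have hneg : HasDerivAt (fun y : ℝ => f (-y)) ((-1 : ℝ) • deriv f (-x)) x := by
    exact HasDerivAt.scomp x (hf2.hasDerivAt) (hasDerivAt_neg x)
  have hinv : HasDerivAt (fun y : ℝ => ((y : ℝ) : ℂ)⁻¹) (-(((x : ℂ) ^ 2)⁻¹)) x :=
    (hasDerivAt_inv hxC).comp_ofReal
  have h3 := (((hasDerivAt_abs_rpowC (-a) hx).const_mul ((γ - 1 / 2 : ℝ) : ℂ)).mul hinv).mul hneg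
  have H := ((h1.sub h2).sub h3).const_mul
    ((-Complex.I) * (hbar : ℂ) * (((lam ^ a * Real.sqrt m₀ : ℝ) : ℂ))⁻¹)
  have hfun : (Ppb hbar m₀ lam a γ f) = (fun y =>
      (-Complex.I) * (hbar : ℂ) * (((lam ^ a * Real.sqrt m₀ : ℝ) : ℂ))⁻¹ *
        (((|y| ^ (-a) : ℝ) : ℂ) * deriv f y
          - ((a / 2 : ℝ) : ℂ) * ((|y| ^ (-a - 2) : ℝ) : ℂ) * (y : ℂ) * f y
          - ((γ - 1 / 2 : ℝ) : ℂ) * ((|y| ^ (-a) : ℝ) : ℂ) * (y : ℂ)⁻¹ * f (-y))) := rfl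
  rw [hfun]
  exact H

lemma differentiableAt_Xd (m₀ lam a : ℝ) {f : ℝ → ℂ} {x : ℝ} (hx : x ≠ 0)
    (h1 : DifferentiableAt ℝ f x) (h3 : DifferentiableAt ℝ (deriv f) x) :
    DifferentiableAt ℝ (Xd m₀ lam a f) x := by
  have hr : ∀ p : ℝ, DifferentiableAt ℝ (fun y : ℝ => ((|y| ^ p : ℝ) : ℂ)) x :=
    fun p => (hasDerivAt_abs_rpowC p hx).differentiableAt
  have hc1 : DifferentiableAt ℝ (fun y : ℝ => ((Real.sqrt m₀ * lam ^ a * ((a + 1) * |y| ^ a) : ℝ) : ℂ)) x := by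
    apply DifferentiableAt.ofRealC
    exact (((hasDerivAt_absRpow a hx).differentiableAt.const_mul (a + 1)).const_mul _)
  have hc2 : DifferentiableAt ℝ (fun y : ℝ => ((Real.sqrt m₀ * lam ^ a * |y| ^ a * y : ℝ) : ℂ)) x := by
    apply DifferentiableAt.ofRealC
    exact ((hasDerivAt_absRpow a hx).differentiableAt.const_mul _).mul differentiableAt_id
  exact (hc1.mul h1).add (hc2.mul h3)

lemma differentiableAt_Pd (hbar m₀ lam a γ : ℝ) {f : ℝ → ℂ} {x : ℝ} (hx : x ≠ 0)
    (h1 : DifferentiableAt ℝ f x) (h2 : DifferentiableAt ℝ f (-x))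
    (h3 : DifferentiableAt ℝ (deriv f) x) (h4 : DifferentiableAt ℝ (deriv f) (-x))
    (h5 : DifferentiableAt ℝ (deriv (deriv f)) x) :
    DifferentiableAt ℝ (Pd hbar m₀ lam a γ f) x := by
  have hxC : (x : ℂ) ≠ 0 := Complex.ofReal_ne_zero.mpr hx
  have hr : ∀ p : ℝ, DifferentiableAt ℝ (fun y : ℝ => ((|y| ^ p : ℝ) : ℂ)) x :=
    fun p => (hasDerivAt_abs_rpowC p hx).differentiableAt
  have hid : DifferentiableAt ℝ (fun y : ℝ => ((y : ℝ) : ℂ)) x :=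
    (hasDerivAt_ofRealC x).differentiableAt
  have hxinv : DifferentiableAt ℝ (fun y : ℝ => ((y : ℝ) : ℂ)⁻¹) x :=
    ((hasDerivAt_inv hxC).comp_ofReal).differentiableAt
  have hdiv : ∀ c p : ℝ, DifferentiableAt ℝ (fun y : ℝ => ((c * |y| ^ p / y : ℝ) : ℂ)) x := by
    intro c p
    apply DifferentiableAt.ofRealC
    exact (((hasDerivAt_absRpow p hx).differentiableAt.const_mul c).div differentiableAt_id hx)
  have hnegf : DifferentiableAt ℝ (fun y : ℝ => f (-y)) x := by
    exact DifferentiableAt.comp x (by simpa using h2) differentiable_neg.differentiableAt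
  have hnegf' : DifferentiableAt ℝ (fun y : ℝ => deriv f (-y)) x := by
    exact DifferentiableAt.comp x (by simpa using h4) differentiable_neg.differentiableAt
  have hsqinv : DifferentiableAt ℝ (fun y : ℝ => -(((y : ℂ) ^ 2)⁻¹)) x :=
    ((hid.pow 2).inv (pow_ne_zero 2 hxC)).neg
  unfold Pd
  apply DifferentiableAt.const_mul
  refine DifferentiableAt.sub (DifferentiableAt.sub ?_ ?_) ?_
  · exact ((hdiv (-a) (-a)).mul h3).add ((hr (-a)).mul h5)
  · refine DifferentiableAt.add ?_ ?_
    · exact ((((hdiv (-a - 2) (-a - 2)).const_mul _).mul hid).add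
        (((hr (-a - 2)).const_mul _).mul_const 1)).mul h1
    · exact (((hr (-a - 2)).const_mul _).mul hid).mul h3
  · refine DifferentiableAt.add ?_ ?_
    · exact ((((hdiv (-a) (-a)).const_mul _).mul hxinv).add
        (((hr (-a)).const_mul _).mul hsqinv)).mul hnegf
    · exact ((((hr (-a)).const_mul _).mul hxinv)).mul (hnegf'.const_smul (-1 : ℝ))

lemma differentiableAt_deriv_Xop (m₀ lam a : ℝ) {f : ℝ → ℂ} {x : ℝ} (hx : x ≠ 0)
    (hf : ∀ y : ℝ, y ≠ 0 → DifferentiableAt ℝ f y)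
    (h3 : DifferentiableAt ℝ (deriv f) x) :
    DifferentiableAt ℝ (deriv (Xop m₀ lam a f)) x := by
  have hev : deriv (Xop m₀ lam a f) =ᶠ[nhds x] Xd m₀ lam a f := by
    filter_upwards [isOpen_ne.mem_nhds hx] with y hy
    exact (hasDerivAt_Xop m₀ lam a hy (hf y hy)).deriv
  exact (hev.differentiableAt_iff).mpr (differentiableAt_Xd m₀ lam a hx (hf x hx) h3)

lemma differentiableAt_deriv_Ppb (hbar m₀ lam a γ : ℝ) {f : ℝ → ℂ} {x : ℝ} (hx : x ≠ 0)
    (hf : ∀ y : ℝ, y ≠ 0 → DifferentiableAt ℝ f y)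
    (hf' : ∀ y : ℝ, y ≠ 0 → DifferentiableAt ℝ (deriv f) y)
    (hf'' : ∀ y : ℝ, y ≠ 0 → DifferentiableAt ℝ (deriv (deriv f)) y) :
    DifferentiableAt ℝ (deriv (Ppb hbar m₀ lam a γ f)) x := by
  have hx' : -x ≠ 0 := neg_ne_zero.mpr hx
  have hev : deriv (Ppb hbar m₀ lam a γ f) =ᶠ[nhds x] Pd hbar m₀ lam a γ f := by
    filter_upwards [isOpen_ne.mem_nhds hx] with y hy
    exact (hasDerivAt_Ppb hbar m₀ lam a γ hy (hf y hy) (hf (-y) (neg_ne_zero.mpr hy))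
      (hf' y hy)).deriv
  exact (hev.differentiableAt_iff).mpr (differentiableAt_Pd hbar m₀ lam a γ hx
    (hf x hx) (hf (-x) hx') (hf' x hx) (hf' (-x) hx') (hf'' x hx))

lemma Ppb_congr (hbar m₀ lam a γ : ℝ) {g h : ℝ → ℂ} {x : ℝ} (hx : x ≠ 0)
    (hgh : ∀ y : ℝ, y ≠ 0 → g y = h y) :
    Ppb hbar m₀ lam a γ g x = Ppb hbar m₀ lam a γ h x := by
  have hev : g =ᶠ[nhds x] h := by
    filter_upwards [isOpen_ne.mem_nhds hx] with y hy
    exact hgh y hy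
  unfold Ppb
  rw [hev.deriv_eq, hgh x hx, hgh (-x) (neg_ne_zero.mpr hx)]

lemma Ppb_add (hbar m₀ lam a γ : ℝ) {g h : ℝ → ℂ} {x : ℝ}
    (hg : DifferentiableAt ℝ g x) (hh : DifferentiableAt ℝ h x) :
    Ppb hbar m₀ lam a γ (fun y => g y + h y) x
      = Ppb hbar m₀ lam a γ g x + Ppb hbar m₀ lam a γ h x := by
  unfold Ppb
  rw [deriv_fun_add hg hh]
  ring

lemma Ppb_smul (hbar m₀ lam a γ : ℝ) (c : ℂ) (g : ℝ → ℂ) (x : ℝ) :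
    Ppb hbar m₀ lam a γ (fun y => c * g y) x = c * Ppb hbar m₀ lam a γ g x := by
  unfold Ppb
  rw [deriv_const_mul_field]
  ring

lemma Ppb_reflect (hbar m₀ lam a γ : ℝ) (f : ℝ → ℂ) {x : ℝ} (hx : x ≠ 0) :
    Ppb hbar m₀ lam a γ (fun y => f (-y)) x = - Ppb hbar m₀ lam a γ f (-x) := by
  have hxC : (x : ℂ) ≠ 0 := Complex.ofReal_ne_zero.mpr hx
  unfold Ppb
  rw [deriv_comp_neg]
  simp only [abs_neg, neg_neg]
  push_cast
  field_simp
  ring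

lemma Xop_reflect (m₀ lam a : ℝ) (f : ℝ → ℂ) (x : ℝ) :
    Xop m₀ lam a f (-x) = -(((Real.sqrt m₀ * lam ^ a * |x| ^ a * x : ℝ) : ℂ)) * f (-x) := by
  unfold Xop
  rw [abs_neg]
  push_cast
  ring

lemma comm1 (hbar m₀ lam a γ : ℝ) (hm₀ : 0 < m₀) (hlam : 0 < lam) {g : ℝ → ℂ} {x : ℝ}
    (hx : x ≠ 0) (hg : DifferentiableAt ℝ g x) (hg2 : DifferentiableAt ℝ g (-x)) :
    Ppb hbar m₀ lam a γ (Xop m₀ lam a g) x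
      = ((Real.sqrt m₀ * lam ^ a * |x| ^ a * x : ℝ) : ℂ) * Ppb hbar m₀ lam a γ g x
        - Complex.I * (hbar : ℂ) * (((1 : ℂ) + (a : ℂ)) * g x
            + ((2 : ℂ) * (γ : ℂ) - 1) * g (-x)) := by
  have hxC : (x : ℂ) ≠ 0 := Complex.ofReal_ne_zero.mpr hx
  have hA : ((|x| ^ a : ℝ) : ℂ) ≠ 0 := by
    exact_mod_cast ne_of_gt (Real.rpow_pos_of_pos (abs_pos.mpr hx) a)
  have hL : ((lam ^ a : ℝ) : ℂ) ≠ 0 := by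
    exact_mod_cast ne_of_gt (Real.rpow_pos_of_pos hlam a)
  have hM : ((Real.sqrt m₀ : ℝ) : ℂ) ≠ 0 := by
    exact_mod_cast ne_of_gt (Real.sqrt_pos.mpr hm₀)
  have e1 : ((|x| ^ (-a) : ℝ) : ℂ) = (((|x| ^ a : ℝ) : ℂ))⁻¹ := by
    rw [Real.rpow_neg (abs_nonneg x)]
    push_cast
    ring
  have e2 : ((|x| ^ (-a - 2) : ℝ) : ℂ) = (((|x| ^ a : ℝ) : ℂ))⁻¹ * (((x : ℂ)) ^ 2)⁻¹ := by
    have h2 : |x| ^ ((2:ℝ)) = x ^ 2 := by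
      rw [show ((2:ℝ)) = ((2:ℕ) : ℝ) by norm_num, Real.rpow_natCast, _root_.sq_abs]
    rw [show (-a - 2 : ℝ) = -(a + 2) by ring, Real.rpow_neg (abs_nonneg x),
      Real.rpow_add (abs_pos.mpr hx), h2, mul_inv]
    push_cast
    ring
  unfold Ppb
  rw [(hasDerivAt_Xop m₀ lam a hx hg).deriv]
  unfold Xd Xop
  rw [abs_neg, e1, e2]
  push_cast
  rw [eq_sub_iff_add_eq]
  field_simp [hxC, hA, hL, hM]
  have hD : ((lam ^ a : ℝ) : ℂ) * ((Real.sqrt m₀ : ℝ) : ℂ) *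
      (((|x| ^ a : ℝ) : ℂ) * (2 * (((|x| ^ a : ℝ) : ℂ) * ((x : ℝ) : ℂ) ^ 2)) *
        (2 * ((|x| ^ a : ℝ) : ℂ) * ((x : ℝ) : ℂ))) ≠ 0 := by
    apply mul_ne_zero (mul_ne_zero hL hM)
    exact mul_ne_zero (mul_ne_zero hA (mul_ne_zero two_ne_zero
      (mul_ne_zero hA (pow_ne_zero 2 hxC))))
      (mul_ne_zero (mul_ne_zero two_ne_zero hA) hxC)
  ring

/-- `[P²,X] = -2iħ(1+a)P` pointwise. -/
lemma commPPX (hbar m₀ lam a γ : ℝ) (hm₀ : 0 < m₀) (hlam : 0 < lam) {f : ℝ → ℂ} {x : ℝ}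
    (hx : x ≠ 0)
    (hf : ∀ y : ℝ, y ≠ 0 → DifferentiableAt ℝ f y)
    (hf' : ∀ y : ℝ, y ≠ 0 → DifferentiableAt ℝ (deriv f) y)
    (hf'' : ∀ y : ℝ, y ≠ 0 → DifferentiableAt ℝ (deriv (deriv f)) y) :
    Ppb hbar m₀ lam a γ (Ppb hbar m₀ lam a γ (Xop m₀ lam a f)) x
      = ((Real.sqrt m₀ * lam ^ a * |x| ^ a * x : ℝ) : ℂ)
            * Ppb hbar m₀ lam a γ (Ppb hbar m₀ lam a γ f) x
        - 2 * Complex.I * (hbar : ℂ) * ((1 : ℂ) + (a : ℂ)) * Ppb hbar m₀ lam a γ f x := by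
  have hx' : -x ≠ 0 := neg_ne_zero.mpr hx
  have hPf : ∀ y : ℝ, y ≠ 0 → DifferentiableAt ℝ (Ppb hbar m₀ lam a γ f) y := fun y hy =>
    (hasDerivAt_Ppb hbar m₀ lam a γ hy (hf y hy) (hf (-y) (neg_ne_zero.mpr hy))
      (hf' y hy)).differentiableAt
  -- P(Xf) agrees with X(Pf) + φ away from 0
  have hcongr : ∀ y : ℝ, y ≠ 0 → Ppb hbar m₀ lam a γ (Xop m₀ lam a f) y
      = Xop m₀ lam a (Ppb hbar m₀ lam a γ f) y
        + (- (Complex.I * (hbar : ℂ)) * (((1 : ℂ) + (a : ℂ)) * f y)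
            + (- (Complex.I * (hbar : ℂ))) * (((2 : ℂ) * (γ : ℂ) - 1) * f (-y))) := by
    intro y hy
    rw [comm1 hbar m₀ lam a γ hm₀ hlam hy (hf y hy) (hf (-y) (neg_ne_zero.mpr hy))]
    show _ = ((Real.sqrt m₀ * lam ^ a * |y| ^ a * y : ℝ) : ℂ) * Ppb hbar m₀ lam a γ f y + _
    ring
  rw [Ppb_congr hbar m₀ lam a γ hx hcongr]
  -- differentiability facts
  have hXPf : DifferentiableAt ℝ (Xop m₀ lam a (Ppb hbar m₀ lam a γ f)) x :=
    (hasDerivAt_Xop m₀ lam a hx (hPf x hx)).differentiableAt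
  have hφ1 : DifferentiableAt ℝ (fun y : ℝ =>
      - (Complex.I * (hbar : ℂ)) * (((1 : ℂ) + (a : ℂ)) * f y)) x :=
    (((hf x hx).const_mul _).const_mul _)
  have hnegf : DifferentiableAt ℝ (fun y : ℝ => f (-y)) x := by
    exact DifferentiableAt.comp x (by simpa using hf (-x) hx') differentiable_neg.differentiableAt
  have hφ2 : DifferentiableAt ℝ (fun y : ℝ =>
      (- (Complex.I * (hbar : ℂ))) * (((2 : ℂ) * (γ : ℂ) - 1) * f (-y))) x :=
    ((hnegf.const_mul _).const_mul _)
  rw [Ppb_add hbar m₀ lam a γ hXPf (hφ1.fun_add hφ2), Ppb_add hbar m₀ lam a γ hφ1 hφ2,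
    Ppb_smul, Ppb_smul, Ppb_smul, Ppb_smul,
    Ppb_reflect hbar m₀ lam a γ f hx,
    comm1 hbar m₀ lam a γ hm₀ hlam hx (hPf x hx) (hPf (-x) hx')]
  ring

/-- `[X²,P]`-type relation: `P(X(Xf)) = cm²·Pf - 2iħ(1+a)·cm·f`. -/
lemma commPXX (hbar m₀ lam a γ : ℝ) (hm₀ : 0 < m₀) (hlam : 0 < lam) {f : ℝ → ℂ} {x : ℝ}
    (hx : x ≠ 0)
    (hf : ∀ y : ℝ, y ≠ 0 → DifferentiableAt ℝ f y) :
    Ppb hbar m₀ lam a γ (Xop m₀ lam a (Xop m₀ lam a f)) x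
      = ((Real.sqrt m₀ * lam ^ a * |x| ^ a * x : ℝ) : ℂ)
          * (((Real.sqrt m₀ * lam ^ a * |x| ^ a * x : ℝ) : ℂ) * Ppb hbar m₀ lam a γ f x)
        - 2 * Complex.I * (hbar : ℂ) * ((1 : ℂ) + (a : ℂ))
            * (((Real.sqrt m₀ * lam ^ a * |x| ^ a * x : ℝ) : ℂ) * f x) := by
  have hx' : -x ≠ 0 := neg_ne_zero.mpr hx
  have hXf : ∀ y : ℝ, y ≠ 0 → DifferentiableAt ℝ (Xop m₀ lam a f) y := fun y hy =>
    (hasDerivAt_Xop m₀ lam a hy (hf y hy)).differentiableAt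
  rw [comm1 hbar m₀ lam a γ hm₀ hlam hx (hXf x hx) (hXf (-x) hx'),
    comm1 hbar m₀ lam a γ hm₀ hlam hx (hf x hx) (hf (-x) hx'),
    Xop_reflect m₀ lam a f x]
  show ((Real.sqrt m₀ * lam ^ a * |x| ^ a * x : ℝ) : ℂ) * _
      - Complex.I * _ * (_ * (((Real.sqrt m₀ * lam ^ a * |x| ^ a * x : ℝ) : ℂ) * f x) + _) = _
  ring

lemma keylin (hbar m₀ ω lam a γ : ℝ) (hm₀ : 0 < m₀) (hlam : 0 < lam) {f : ℝ → ℂ} {x : ℝ}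
    (hx : x ≠ 0)
    (hf : ∀ y : ℝ, y ≠ 0 → DifferentiableAt ℝ f y)
    (hf' : ∀ y : ℝ, y ≠ 0 → DifferentiableAt ℝ (deriv f) y)
    (hf'' : ∀ y : ℝ, y ≠ 0 → DifferentiableAt ℝ (deriv (deriv f)) y)
    (c1 c2 : ℂ) :
    HopPB hbar m₀ ω lam a γ
        (fun y => c1 * Xop m₀ lam a f y + c2 * Ppb hbar m₀ lam a γ f y) x
      - (c1 * Xop m₀ lam a (HopPB hbar m₀ ω lam a γ f) x
          + c2 * Ppb hbar m₀ lam a γ (HopPB hbar m₀ ω lam a γ f) x)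
      = - Complex.I * (hbar : ℂ) * ((1 : ℂ) + (a : ℂ))
          * (c1 * Ppb hbar m₀ lam a γ f x
            - ((ω : ℝ) : ℂ) ^ 2 * c2
                * (((Real.sqrt m₀ * lam ^ a * |x| ^ a * x : ℝ) : ℂ) * f x)) := by
  have hx' : -x ≠ 0 := neg_ne_zero.mpr hx
  have hXfd : ∀ y : ℝ, y ≠ 0 → DifferentiableAt ℝ (Xop m₀ lam a f) y := fun y hy =>
    (hasDerivAt_Xop m₀ lam a hy (hf y hy)).differentiableAt
  have hPfd : ∀ y : ℝ, y ≠ 0 → DifferentiableAt ℝ (Ppb hbar m₀ lam a γ f) y := fun y hy =>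
    (hasDerivAt_Ppb hbar m₀ lam a γ hy (hf y hy) (hf (-y) (neg_ne_zero.mpr hy))
      (hf' y hy)).differentiableAt
  have hPXf : DifferentiableAt ℝ (Ppb hbar m₀ lam a γ (Xop m₀ lam a f)) x :=
    (hasDerivAt_Ppb hbar m₀ lam a γ hx (hXfd x hx) (hXfd (-x) hx')
      (differentiableAt_deriv_Xop m₀ lam a hx hf (hf' x hx))).differentiableAt
  have hPPf : DifferentiableAt ℝ (Ppb hbar m₀ lam a γ (Ppb hbar m₀ lam a γ f)) x :=
    (hasDerivAt_Ppb hbar m₀ lam a γ hx (hPfd x hx) (hPfd (-x) hx')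
      (differentiableAt_deriv_Ppb hbar m₀ lam a γ hx hf hf' hf'')).differentiableAt
  have hXXf : DifferentiableAt ℝ (Xop m₀ lam a (Xop m₀ lam a f)) x :=
    (hasDerivAt_Xop m₀ lam a hx (hXfd x hx)).differentiableAt
  -- step A : P g = c1 P(Xf) + c2 P(Pf) away from 0
  have hA : ∀ y : ℝ, y ≠ 0 →
      Ppb hbar m₀ lam a γ
          (fun z => c1 * Xop m₀ lam a f z + c2 * Ppb hbar m₀ lam a γ f z) y
        = c1 * Ppb hbar m₀ lam a γ (Xop m₀ lam a f) y
          + c2 * Ppb hbar m₀ lam a γ (Ppb hbar m₀ lam a γ f) y := by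
    intro y hy
    rw [Ppb_add hbar m₀ lam a γ ((hXfd y hy).const_mul c1) ((hPfd y hy).const_mul c2),
      Ppb_smul, Ppb_smul]
  -- step B : P(P g) x
  have hB : Ppb hbar m₀ lam a γ (Ppb hbar m₀ lam a γ
        (fun z => c1 * Xop m₀ lam a f z + c2 * Ppb hbar m₀ lam a γ f z)) x
      = c1 * Ppb hbar m₀ lam a γ (Ppb hbar m₀ lam a γ (Xop m₀ lam a f)) x
        + c2 * Ppb hbar m₀ lam a γ (Ppb hbar m₀ lam a γ (Ppb hbar m₀ lam a γ f)) x := by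
    rw [Ppb_congr hbar m₀ lam a γ hx hA,
      Ppb_add hbar m₀ lam a γ (hPXf.const_mul c1) (hPPf.const_mul c2), Ppb_smul, Ppb_smul]
  -- step D : P (H f) x
  have hD : Ppb hbar m₀ lam a γ (HopPB hbar m₀ ω lam a γ f) x
      = (1 / 2 : ℂ) * Ppb hbar m₀ lam a γ
            (Ppb hbar m₀ lam a γ (Ppb hbar m₀ lam a γ f)) x
        + ((ω ^ 2 / 2 : ℝ) : ℂ) * Ppb hbar m₀ lam a γ (Xop m₀ lam a (Xop m₀ lam a f)) x := by
    have e : HopPB hbar m₀ ω lam a γ f = fun y =>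
        (1 / 2 : ℂ) * Ppb hbar m₀ lam a γ (Ppb hbar m₀ lam a γ f) y
          + ((ω ^ 2 / 2 : ℝ) : ℂ) * Xop m₀ lam a (Xop m₀ lam a f) y := rfl
    rw [e, Ppb_add hbar m₀ lam a γ (hPPf.const_mul _) (hXXf.const_mul _), Ppb_smul, Ppb_smul]
  have hC : HopPB hbar m₀ ω lam a γ
        (fun y => c1 * Xop m₀ lam a f y + c2 * Ppb hbar m₀ lam a γ f y) x
      = (1 / 2 : ℂ) * (c1 * Ppb hbar m₀ lam a γ (Ppb hbar m₀ lam a γ (Xop m₀ lam a f)) x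
            + c2 * Ppb hbar m₀ lam a γ (Ppb hbar m₀ lam a γ (Ppb hbar m₀ lam a γ f)) x)
        + ((ω ^ 2 / 2 : ℝ) : ℂ) * (((Real.sqrt m₀ * lam ^ a * |x| ^ a * x : ℝ) : ℂ)
            * (((Real.sqrt m₀ * lam ^ a * |x| ^ a * x : ℝ) : ℂ)
              * (c1 * (((Real.sqrt m₀ * lam ^ a * |x| ^ a * x : ℝ) : ℂ) * f x)
                  + c2 * Ppb hbar m₀ lam a γ f x))) := by
    show (1 / 2 : ℂ) * Ppb hbar m₀ lam a γ (Ppb hbar m₀ lam a γ _) x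
        + ((ω ^ 2 / 2 : ℝ) : ℂ) * (((Real.sqrt m₀ * lam ^ a * |x| ^ a * x : ℝ) : ℂ)
            * (((Real.sqrt m₀ * lam ^ a * |x| ^ a * x : ℝ) : ℂ)
              * (c1 * (((Real.sqrt m₀ * lam ^ a * |x| ^ a * x : ℝ) : ℂ) * f x)
                  + c2 * Ppb hbar m₀ lam a γ f x))) = _
    rw [hB]
  have hE : Xop m₀ lam a (HopPB hbar m₀ ω lam a γ f) x
      = ((Real.sqrt m₀ * lam ^ a * |x| ^ a * x : ℝ) : ℂ)
          * ((1 / 2 : ℂ) * Ppb hbar m₀ lam a γ (Ppb hbar m₀ lam a γ f) x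
            + ((ω ^ 2 / 2 : ℝ) : ℂ) * (((Real.sqrt m₀ * lam ^ a * |x| ^ a * x : ℝ) : ℂ)
                * (((Real.sqrt m₀ * lam ^ a * |x| ^ a * x : ℝ) : ℂ) * f x))) := rfl
  rw [hC, hD, hE, commPPX hbar m₀ lam a γ hm₀ hlam hx hf hf' hf'',
    commPXX hbar m₀ lam a γ hm₀ hlam hx hf]
  push_cast
  ring

/-- the commutation relations `[H, ã^±] = ±ħω(1+a)ã^±` for the parabose oscillator
with position-dependent mass, for every `f` three times differentiable on `ℝ \ {0}` and every
`x ≠ 0`. -/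
theorem stmt13 (m₀ ω hbar a γ : ℝ) (hm₀ : 0 < m₀) (hω : 0 < ω) (hhb : 0 < hbar)
    (ha : -1 < a) (hγ : 1 / 2 < γ)
    (lam : ℝ) (hlam : lam = Real.sqrt (m₀ * ω / hbar))
    (f : ℝ → ℂ)
    (hf : ∀ y : ℝ, y ≠ 0 → DifferentiableAt ℝ f y)
    (hf' : ∀ y : ℝ, y ≠ 0 → DifferentiableAt ℝ (deriv f) y)
    (hf'' : ∀ y : ℝ, y ≠ 0 → DifferentiableAt ℝ (deriv (deriv f)) y)
    (x : ℝ) (hx : x ≠ 0) :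
    HopPB hbar m₀ ω lam a γ (aPlusPB hbar m₀ ω lam a γ f) x
        - aPlusPB hbar m₀ ω lam a γ (HopPB hbar m₀ ω lam a γ f) x
      = ((hbar * ω * (1 + a) : ℝ) : ℂ) * aPlusPB hbar m₀ ω lam a γ f x ∧
    HopPB hbar m₀ ω lam a γ (aMinusPB hbar m₀ ω lam a γ f) x
        - aMinusPB hbar m₀ ω lam a γ (HopPB hbar m₀ ω lam a γ f) x
      = -((hbar * ω * (1 + a) : ℝ) : ℂ) * aMinusPB hbar m₀ ω lam a γ f x := by
  have hlam0 : 0 < lam := by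
    rw [hlam]; exact Real.sqrt_pos.mpr (by positivity)
  have hs0R : Real.sqrt (hbar * ω) ≠ 0 := ne_of_gt (Real.sqrt_pos.mpr (by positivity))
  have hs0 : ((Real.sqrt (hbar * ω) : ℝ) : ℂ) ≠ 0 := Complex.ofReal_ne_zero.mpr hs0R
  have hαR : Real.sqrt (ω / hbar) = ω / Real.sqrt (hbar * ω) := by
    rw [eq_div_iff hs0R, ← Real.sqrt_mul (by positivity)]
    rw [show ω / hbar * (hbar * ω) = ω ^ 2 by field_simp]
    exact Real.sqrt_sq hω.le
  have hα : ((Real.sqrt (ω / hbar) : ℝ) : ℂ)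
      = ((ω : ℝ) : ℂ) / ((Real.sqrt (hbar * ω) : ℝ) : ℂ) := by
    rw [hαR]; push_cast; ring
  constructor
  · set c1 : ℂ := ((1 / Real.sqrt 2 : ℝ) : ℂ) * ((Real.sqrt (ω / hbar) : ℝ) : ℂ) with hc1
    set c2 : ℂ := -(((1 / Real.sqrt 2 : ℝ) : ℂ)
      * (Complex.I / ((Real.sqrt (hbar * ω) : ℝ) : ℂ))) with hc2
    have e1 : aPlusPB hbar m₀ ω lam a γ f
        = fun y => c1 * Xop m₀ lam a f y + c2 * Ppb hbar m₀ lam a γ f y := by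
      funext y; unfold aPlusPB; rw [hc1, hc2]; ring
    have e2 : aPlusPB hbar m₀ ω lam a γ (HopPB hbar m₀ ω lam a γ f) x
        = c1 * Xop m₀ lam a (HopPB hbar m₀ ω lam a γ f) x
          + c2 * Ppb hbar m₀ lam a γ (HopPB hbar m₀ ω lam a γ f) x := by
      unfold aPlusPB; rw [hc1, hc2]; ring
    rw [e1, e2, keylin hbar m₀ ω lam a γ hm₀ hlam0 hx hf hf' hf'' c1 c2]
    show _ = _ * (c1 * (((Real.sqrt m₀ * lam ^ a * |x| ^ a * x : ℝ) : ℂ) * f x)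
        + c2 * Ppb hbar m₀ lam a γ f x)
    rw [hc1, hc2, hα]
    push_cast
    field_simp
    ring_nf
    rw [Complex.I_sq]
    ring
  · set c1 : ℂ := ((1 / Real.sqrt 2 : ℝ) : ℂ) * ((Real.sqrt (ω / hbar) : ℝ) : ℂ) with hc1
    set c2 : ℂ := ((1 / Real.sqrt 2 : ℝ) : ℂ)
      * (Complex.I / ((Real.sqrt (hbar * ω) : ℝ) : ℂ)) with hc2
    have e1 : aMinusPB hbar m₀ ω lam a γ f
        = fun y => c1 * Xop m₀ lam a f y + c2 * Ppb hbar m₀ lam a γ f y := by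
      funext y; unfold aMinusPB; rw [hc1, hc2]; ring
    have e2 : aMinusPB hbar m₀ ω lam a γ (HopPB hbar m₀ ω lam a γ f) x
        = c1 * Xop m₀ lam a (HopPB hbar m₀ ω lam a γ f) x
          + c2 * Ppb hbar m₀ lam a γ (HopPB hbar m₀ ω lam a γ f) x := by
      unfold aMinusPB; rw [hc1, hc2]; ring
    rw [e1, e2, keylin hbar m₀ ω lam a γ hm₀ hlam0 hx hf hf' hf'' c1 c2]
    show _ = _ * (c1 * (((Real.sqrt m₀ * lam ^ a * |x| ^ a * x : ℝ) : ℂ) * f x)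
        + c2 * Ppb hbar m₀ lam a γ f x)
    rw [hc1, hc2, hα]
    push_cast
    field_simp
    ring_nf
    rw [Complex.I_sq]
    ring
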